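/- arXiv:1902.01429 — 4 statements merged into one kernel-verified Lean document; each statement's English description precedes it below -/
import Mathlib

section
/- Substituting the optimal values W* = (1/T) Σ_t y_t x_t^T, M* = (1/T) Σ_t y_t y_t^T, and b* = (α/T) Σ_t y_t into the min-max objective (1/T) Σ_t [Tr(W^T W) - (1/2) Tr(M^T M) - ‖b‖₂² - 2 y_t^T(W x_t - α b) + y_t^T M y_t + 2λ₁‖y_t‖₁ + λ₂‖y_t‖₂²] yields, up to the additive constant -(1/(2T²)) Σ_{t,t'} (x_t^T x_{t'})² - α⁴/2 (after expanding the square), a quantity equal to the original NSM cost (1/(2T²)) Σ_{t,t'} (x_t^T x_{t'} - y_t^T y_{t'} - α²)² + (2λ₁/T) Σ_t ‖y_t‖₁ + (λ₂/T) Σ_t ‖y_t‖₂². -/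
open Finset Matrix

private lemma sum4' {α β γ δ : Type*} [Fintype α][Fintype β][Fintype γ][Fintype δ]
    (f : α → β → γ → δ → ℝ) :
    ∑ a, ∑ b, ∑ c, ∑ d, f a b c d = ∑ c, ∑ d, ∑ a, ∑ b, f a b c d := by
  have h1 : ∀ a : α, ∑ b, ∑ c : γ, ∑ d, f a b c d = ∑ c, ∑ b, ∑ d, f a b c d :=
    fun a => Finset.sum_comm
  simp only [h1]
  have h2 : ∑ a : α, ∑ c : γ, (∑ b, ∑ d, f a b c d) = ∑ c, ∑ a, ∑ b, ∑ d, f a b c d :=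
    Finset.sum_comm
  rw [h2]
  refine Finset.sum_congr rfl fun c _ => ?_
  have h3 : ∀ a : α, ∑ b, ∑ d : δ, f a b c d = ∑ d, ∑ b, f a b c d :=
    fun a => Finset.sum_comm
  simp only [h3]
  exact Finset.sum_comm

private lemma sq_sum_expand {ι κ : Type*} [Fintype ι] [Fintype κ] {T : ℕ} (c : ℝ)
    (u : Fin T → ι → ℝ) (v : Fin T → κ → ℝ) :
    ∑ i : ι, ∑ j : κ, (c * ∑ t, u t i * v t j) ^ 2
      = c ^ 2 * ∑ t, ∑ s, (∑ i, u t i * u s i) * (∑ j, v t j * v s j) := by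
  have e : ∀ (i : ι) (j : κ), (c * ∑ t, u t i * v t j) ^ 2
      = ∑ t, ∑ s, c ^ 2 * ((u t i * u s i) * (v t j * v s j)) := by
    intro i j
    rw [sq, mul_mul_mul_comm, Finset.sum_mul_sum, Finset.mul_sum]
    refine Finset.sum_congr rfl fun t _ => ?_
    rw [Finset.mul_sum]
    exact Finset.sum_congr rfl fun s _ => by ring
  simp only [e]
  rw [sum4' (f := fun i j t s => c ^ 2 * ((u t i * u s i) * (v t j * v s j)))]
  rw [Finset.mul_sum]
  refine Finset.sum_congr rfl fun t _ => ?_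
  rw [Finset.mul_sum]
  refine Finset.sum_congr rfl fun s _ => ?_
  rw [Finset.sum_mul_sum, Finset.mul_sum]
  refine Finset.sum_congr rfl fun i _ => ?_
  rw [Finset.mul_sum]

private lemma sq_sum_expand1 {ι : Type*} [Fintype ι] {T : ℕ} (c : ℝ)
    (u : Fin T → ι → ℝ) :
    ∑ i : ι, (c * ∑ t, u t i) ^ 2 = c ^ 2 * ∑ t, ∑ s, ∑ i, u t i * u s i := by
  have e : ∀ i : ι, (c * ∑ t, u t i) ^ 2 = ∑ t, ∑ s, c ^ 2 * (u t i * u s i) := by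
    intro i
    rw [sq, mul_mul_mul_comm, Finset.sum_mul_sum, Finset.mul_sum]
    refine Finset.sum_congr rfl fun t _ => ?_
    rw [Finset.mul_sum]
    exact Finset.sum_congr rfl fun s _ => by ring
  simp only [e]
  rw [Finset.sum_comm]
  rw [Finset.mul_sum]
  refine Finset.sum_congr rfl fun t _ => ?_
  rw [Finset.sum_comm, Finset.mul_sum]
  refine Finset.sum_congr rfl fun s _ => ?_
  rw [Finset.mul_sum]

/-- Substituting the optimal `W* = (1/T) Σ_t y_t x_tᵀ`,
`M* = (1/T) Σ_t y_t y_tᵀ`, `b* = (α/T) Σ_t y_t` into the min-max objective yields the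
original NSM cost up to an additive constant independent of `y`, namely
`-(1/(2T²)) Σ_{t,t'} (x_tᵀx_{t'} - α²)²`
(which expands to `-(1/(2T²)) Σ_{t,t'} (x_tᵀx_{t'})² - α⁴/2` plus a cross term). -/
theorem nsm_substitution_identity
    (n k T : ℕ) (hT : 0 < T) (α lam1 lam2 : ℝ)
    (hα : 0 ≤ α) (hlam1 : 0 ≤ lam1) (hlam2 : 0 ≤ lam2)
    (x : Fin T → Fin n → ℝ) (y : Fin T → Fin k → ℝ)
    (Wstar : Matrix (Fin k) (Fin n) ℝ) (Mstar : Matrix (Fin k) (Fin k) ℝ)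
    (bstar : Fin k → ℝ)
    (hW : ∀ i j, Wstar i j = (1 / (T : ℝ)) * ∑ t, y t i * x t j)
    (hM : ∀ i j, Mstar i j = (1 / (T : ℝ)) * ∑ t, y t i * y t j)
    (hb : ∀ i, bstar i = (α / (T : ℝ)) * ∑ t, y t i)
    (L C : ℝ)
    (hL : L = (1 / (T : ℝ)) * ∑ t,
        ((Wstarᵀ * Wstar).trace - (1 / 2) * (Mstarᵀ * Mstar).trace
          - ∑ i, (bstar i) ^ 2
          - 2 * ∑ i, y t i * ((∑ j, Wstar i j * x t j) - α * bstar i)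
          + (∑ i, y t i * ∑ j, Mstar i j * y t j)
          + 2 * lam1 * ∑ i, |y t i| + lam2 * ∑ i, (y t i) ^ 2))
    (hC : C = (1 / (2 * (T : ℝ) ^ 2)) * ∑ t, ∑ t',
          ((∑ j, x t j * x t' j) - (∑ i, y t i * y t' i) - α ^ 2) ^ 2
        + (2 * lam1 / (T : ℝ)) * ∑ t, ∑ i, |y t i|
        + (lam2 / (T : ℝ)) * ∑ t, ∑ i, (y t i) ^ 2) :
    L = C - (1 / (2 * (T : ℝ) ^ 2)) * ∑ t, ∑ t',
          ((∑ j, x t j * x t' j) - α ^ 2) ^ 2 := by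
  have hT0 : (T : ℝ) ≠ 0 := Nat.cast_ne_zero.mpr hT.ne'
  -- scaled forms of the definitions
  have hWT : ∀ i j, ∑ t, y t i * x t j = (T : ℝ) * Wstar i j := by
    intro i j; rw [hW]; field_simp
  have hMT : ∀ i j, ∑ t, y t i * y t j = (T : ℝ) * Mstar i j := by
    intro i j; rw [hM]; field_simp
  have hbT : ∀ i, α * ∑ t, y t i = (T : ℝ) * bstar i := by
    intro i; rw [hb]; field_simp
  -- traces as entrywise square sums
  have F1 : (Wstarᵀ * Wstar).trace = ∑ i, ∑ j, Wstar i j ^ 2 := by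
    rw [Matrix.trace]
    simp only [Matrix.diag_apply, Matrix.mul_apply, Matrix.transpose_apply, ← sq]
    exact Finset.sum_comm
  have F2 : (Mstarᵀ * Mstar).trace = ∑ i, ∑ j, Mstar i j ^ 2 := by
    rw [Matrix.trace]
    simp only [Matrix.diag_apply, Matrix.mul_apply, Matrix.transpose_apply, ← sq]
    exact Finset.sum_comm
  -- the data-dependent sums collapse onto the squares
  have F3 : ∑ t, ∑ i, y t i * ∑ j, Wstar i j * x t j
      = (T : ℝ) * ∑ i, ∑ j, Wstar i j ^ 2 := by
    rw [Finset.sum_comm, Finset.mul_sum]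
    refine Finset.sum_congr rfl fun i _ => ?_
    calc ∑ t, y t i * ∑ j, Wstar i j * x t j
        = ∑ j, Wstar i j * ∑ t, y t i * x t j := by
          simp only [Finset.mul_sum]
          rw [Finset.sum_comm]
          exact Finset.sum_congr rfl fun j _ => Finset.sum_congr rfl fun t _ => by ring
      _ = ∑ j, Wstar i j * ((T : ℝ) * Wstar i j) := by simp only [hWT]
      _ = (T : ℝ) * ∑ j, Wstar i j ^ 2 := by
          rw [Finset.mul_sum]; exact Finset.sum_congr rfl fun j _ => by ring
  have F5 : ∑ t, ∑ i, y t i * ∑ j, Mstar i j * y t j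
      = (T : ℝ) * ∑ i, ∑ j, Mstar i j ^ 2 := by
    rw [Finset.sum_comm, Finset.mul_sum]
    refine Finset.sum_congr rfl fun i _ => ?_
    calc ∑ t, y t i * ∑ j, Mstar i j * y t j
        = ∑ j, Mstar i j * ∑ t, y t i * y t j := by
          simp only [Finset.mul_sum]
          rw [Finset.sum_comm]
          exact Finset.sum_congr rfl fun j _ => Finset.sum_congr rfl fun t _ => by ring
      _ = ∑ j, Mstar i j * ((T : ℝ) * Mstar i j) := by simp only [hMT]
      _ = (T : ℝ) * ∑ j, Mstar i j ^ 2 := by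
          rw [Finset.mul_sum]; exact Finset.sum_congr rfl fun j _ => by ring
  have F4 : ∑ t, ∑ i, y t i * (α * bstar i) = (T : ℝ) * ∑ i, bstar i ^ 2 := by
    rw [Finset.sum_comm, Finset.mul_sum]
    refine Finset.sum_congr rfl fun i _ => ?_
    rw [← Finset.sum_mul]
    calc (∑ t, y t i) * (α * bstar i) = (α * ∑ t, y t i) * bstar i := by ring
      _ = ((T : ℝ) * bstar i) * bstar i := by rw [hbT i]
      _ = (T : ℝ) * bstar i ^ 2 := by ring
  -- entrywise square sums as double sums over data
  have G1 : ∑ i, ∑ j, Wstar i j ^ 2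
      = (1 / (T : ℝ)) ^ 2 * ∑ t, ∑ s, (∑ i, y t i * y s i) * (∑ j, x t j * x s j) := by
    calc ∑ i, ∑ j, Wstar i j ^ 2
        = ∑ i, ∑ j, ((1 / (T : ℝ)) * ∑ t, y t i * x t j) ^ 2 := by
          exact Finset.sum_congr rfl fun i _ => Finset.sum_congr rfl fun j _ => by rw [hW]
      _ = _ := sq_sum_expand _ _ _
  have G2 : ∑ i, ∑ j, Mstar i j ^ 2
      = (1 / (T : ℝ)) ^ 2 * ∑ t, ∑ s, (∑ i, y t i * y s i) * (∑ j, y t j * y s j) := by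
    calc ∑ i, ∑ j, Mstar i j ^ 2
        = ∑ i, ∑ j, ((1 / (T : ℝ)) * ∑ t, y t i * y t j) ^ 2 := by
          exact Finset.sum_congr rfl fun i _ => Finset.sum_congr rfl fun j _ => by rw [hM]
      _ = _ := sq_sum_expand _ _ _
  have G3 : ∑ i, bstar i ^ 2
      = (α / (T : ℝ)) ^ 2 * ∑ t, ∑ s, ∑ i, y t i * y s i := by
    calc ∑ i, bstar i ^ 2
        = ∑ i, ((α / (T : ℝ)) * ∑ t, y t i) ^ 2 :=
          Finset.sum_congr rfl fun i _ => by rw [hb]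
      _ = _ := sq_sum_expand1 _ _
  -- expand the NSM cost's quadratic term
  have hCsum : ∑ t, ∑ s, ((∑ j, x t j * x s j) - (∑ i, y t i * y s i) - α ^ 2) ^ 2
      = ∑ t, ∑ s, ((∑ j, x t j * x s j) - α ^ 2) ^ 2
        + (∑ t, ∑ s, (∑ i, y t i * y s i) * (∑ j, y t j * y s j)
          - 2 * ∑ t, ∑ s, (∑ i, y t i * y s i) * (∑ j, x t j * x s j)
          + 2 * α ^ 2 * ∑ t, ∑ s, ∑ i, y t i * y s i) := by
    have e : ∀ t s : Fin T,
        ((∑ j, x t j * x s j) - (∑ i, y t i * y s i) - α ^ 2) ^ 2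
        = ((∑ j, x t j * x s j) - α ^ 2) ^ 2
          + ((∑ i, y t i * y s i) * (∑ j, y t j * y s j)
            - 2 * ((∑ i, y t i * y s i) * (∑ j, x t j * x s j))
            + 2 * α ^ 2 * ∑ i, y t i * y s i) := by
      intro t s
      have hy : (∑ j, y t j * y s j) = (∑ i, y t i * y s i) := rfl
      rw [hy]; ring
    simp only [e]
    simp only [Finset.sum_add_distrib, Finset.sum_sub_distrib, ← Finset.mul_sum]
  -- assemble L
  rw [hL]
  simp only [mul_sub, Finset.sum_sub_distrib, Finset.sum_add_distrib,
    Finset.sum_const, Finset.card_univ, Fintype.card_fin, nsmul_eq_mul,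
    ← Finset.mul_sum]
  rw [F1, F2, F3, F4, F5, G1, G2, G3, hC, hCsum]
  field_simp
  ring
end

section
/- Let M ∈ R^{k×k} be symmetric with M_ii + λ₂ > 0 for all i, and let h(y) = -2 y^T c + y^T M y + 2λ₁‖y‖₁ + λ₂‖y‖₂² for y ≥ 0 (componentwise). Then a point y* ≥ 0 is a KKT point of the minimization of h over the nonnegative orthant if and only if for every i, y*_i = g_i(u*_i) where u*_i = c_i - [ (M - diag(M)) y* ]_i and g_i(u) = max(u - λ₁, 0)/(λ₂ + M_ii). In particular, fixed points of the neural dynamics correspond to KKT points of h. -/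
open Finset Matrix

/-- For `h(y) = -2 yᵀc + yᵀMy + 2λ₁‖y‖₁ + λ₂‖y‖₂²` minimized over the
nonnegative orthant, a point `y* ≥ 0` is a KKT point iff for every `i`,
`y*_i = g_i(u*_i)` with `u*_i = c_i - [(M - diag M) y*]_i` and
`g_i(u) = max(u - λ₁, 0)/(λ₂ + M_ii)`; i.e. fixed points of the neural dynamics
correspond to KKT points of `h`. -/
theorem kkt_iff_fixed_point
    (k : ℕ) (c : Fin k → ℝ) (lam1 lam2 : ℝ)
    (hlam1 : 0 ≤ lam1) (hlam2 : 0 ≤ lam2)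
    (M : Matrix (Fin k) (Fin k) ℝ) (hMsymm : Mᵀ = M)
    (hdiag : ∀ i, 0 < lam2 + M i i)
    (ystar : Fin k → ℝ) (hy : ∀ i, 0 ≤ ystar i) :
    -- KKT conditions for minimizing h over {y ≥ 0}
    (∀ i, 0 ≤ -2 * c i + 2 * (M.mulVec ystar) i + 2 * lam2 * ystar i + 2 * lam1 ∧
        (0 < ystar i →
          -2 * c i + 2 * (M.mulVec ystar) i + 2 * lam2 * ystar i + 2 * lam1 = 0))
      ↔
    -- fixed point of the neural dynamics: y*_i = g_i(u*_i)
    (∀ i, ystar i =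
        max ((c i - ∑ j ∈ univ \ {i}, M i j * ystar j) - lam1) 0 / (lam2 + M i i)) := by
  have hmv : ∀ i, (M.mulVec ystar) i
      = M i i * ystar i + ∑ j ∈ univ \ {i}, M i j * ystar j := by
    intro i
    have : (M.mulVec ystar) i = ∑ j, M i j * ystar j := rfl
    rw [this, ← Finset.sum_erase_add _ _ (Finset.mem_univ i), add_comm,
      Finset.sdiff_singleton_eq_erase]
  constructor
  · intro h i
    set u := c i - ∑ j ∈ univ \ {i}, M i j * ystar j with hu
    obtain ⟨h1, h2⟩ := h i
    rw [hmv i] at h1 h2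
    rcases lt_or_eq_of_le (hy i) with hpos | hzero
    · have heq := h2 hpos
      have : (lam2 + M i i) * ystar i = u - lam1 := by rw [hu]; linarith
      have hmax : max (u - lam1) 0 = u - lam1 := by
        have : 0 < u - lam1 := by
          rw [← this]; exact mul_pos (hdiag i) hpos
        exact max_eq_left this.le
      rw [hmax, eq_div_iff (hdiag i).ne']
      linarith [this]
    · have h0 : u - lam1 ≤ 0 := by
        rw [hu]; nlinarith [hdiag i]
      rw [max_eq_right h0, zero_div, ← hzero]
  · intro h i
    set u := c i - ∑ j ∈ univ \ {i}, M i j * ystar j with hu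
    have hyi := h i
    rcases le_or_gt (u - lam1) 0 with hle | hgt
    · rw [max_eq_right hle, zero_div] at hyi
      constructor
      · rw [hmv i]; rw [hu] at hle
        have hz : M i i * ystar i = 0 := by rw [hyi]; ring
        have hz2 : lam2 * ystar i = 0 := by rw [hyi]; ring
        linarith
      · intro hpos; rw [hyi] at hpos; exact absurd hpos (lt_irrefl 0)
    · rw [max_eq_left hgt.le] at hyi
      have hne := (hdiag i).ne'
      have key : (lam2 + M i i) * ystar i = u - lam1 := by
        rw [hyi]; field_simp
      have : -2 * c i + 2 * (M.mulVec ystar) i + 2 * lam2 * ystar i + 2 * lam1 = 0 := by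
        rw [hmv i, hu] at *; linarith
      exact ⟨this.ge, fun _ => this⟩
end

section
/- Along trajectories of the dynamics du_i/dτ = -u_i + c_i - (M̄ g(u))_i with output y_i = g_i(u_i) = max(u_i - λ₁, 0)/(λ₂ + M_ii), the objective h(y(τ)) = -2 y^T c + y^T M y + 2λ₁‖y‖₁ + λ₂‖y‖₂² is nonincreasing: dh(y(τ))/dτ ≤ 0. -/
open Finset Matrix

/-- Along trajectories of `du_i/dτ = -u_i + c_i - (M̄ g(u))_i` with output
`y_i = g_i(u_i) = max(u_i - λ₁, 0)/(λ₂ + M_ii)`, the objective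
`h(y) = -2 yᵀc + yᵀMy + 2λ₁‖y‖₁ + λ₂‖y‖₂²` is nonincreasing: at a time `τ₀` where no
`u_i` equals `λ₁`, `h(y(τ))` is differentiable with nonpositive derivative. -/
theorem objective_nonincreasing_along_dynamics
    (k : ℕ) (c : Fin k → ℝ) (lam1 lam2 : ℝ)
    (hlam1 : 0 ≤ lam1) (hlam2 : 0 ≤ lam2)
    (M : Matrix (Fin k) (Fin k) ℝ) (hMsymm : Mᵀ = M)
    (hdiag : ∀ i, 0 < lam2 + M i i)
    (g : Fin k → ℝ → ℝ)
    (hg : ∀ i v, g i v = max (v - lam1) 0 / (lam2 + M i i))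
    (h : (Fin k → ℝ) → ℝ)
    (hh : ∀ y, h y = -2 * (∑ i, y i * c i) + (∑ i, y i * ∑ j, M i j * y j)
        + 2 * lam1 * (∑ i, |y i|) + lam2 * (∑ i, (y i) ^ 2))
    (u : ℝ → Fin k → ℝ) (τ₀ : ℝ)
    (hdyn : ∀ τ : ℝ, ∀ i, HasDerivAt (fun s => u s i)
        (-u τ i + c i - ∑ j ∈ univ \ {i}, M i j * g j (u τ j)) τ)
    (hne : ∀ i, u τ₀ i ≠ lam1) :
    ∃ d : ℝ, d ≤ 0 ∧ HasDerivAt (fun τ => h (fun i => g i (u τ i))) d τ₀ := by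
  classical
  set u' : Fin k → ℝ := fun i => -u τ₀ i + c i - ∑ j ∈ univ \ {i}, M i j * g j (u τ₀ j) with hu'
  set D : Fin k → ℝ := fun i => if lam1 < u τ₀ i then u' i / (lam2 + M i i) else 0 with hD
  have hYnn : ∀ τ i, 0 ≤ g i (u τ i) := by
    intro τ i
    rw [hg]
    exact div_nonneg (le_max_right _ _) (hdiag i).le
  have hYd : ∀ i, HasDerivAt (fun τ => g i (u τ i)) (D i) τ₀ := by
    intro i
    have hc : ContinuousAt (fun s => u s i) τ₀ := (hdyn τ₀ i).continuousAt
    rcases lt_or_gt_of_ne (hne i) with hlt | hgt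
    · have hev : ∀ᶠ τ in nhds τ₀, u τ i < lam1 := hc.eventually_lt_const hlt
      have hev0 : (fun τ => g i (u τ i)) =ᶠ[nhds τ₀] fun _ => (0:ℝ) := by
        filter_upwards [hev] with τ hτ
        rw [hg, max_eq_right (by linarith : u τ i - lam1 ≤ 0), zero_div]
      have h0 : HasDerivAt (fun _ : ℝ => (0:ℝ)) 0 τ₀ := hasDerivAt_const _ _
      have := h0.congr_of_eventuallyEq hev0
      simpa [hD, not_lt.mpr hlt.le] using this
    · have hev : ∀ᶠ τ in nhds τ₀, lam1 < u τ i := hc.eventually_const_lt hgt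
      have hDi : D i = u' i / (lam2 + M i i) := if_pos hgt
      rw [hDi]
      refine HasDerivAt.congr_of_eventuallyEq (((hdyn τ₀ i).sub_const lam1).div_const _) ?_
      filter_upwards [hev] with τ hτ
      rw [hg, max_eq_left (by linarith : (0:ℝ) ≤ u τ i - lam1)]
  have hS1 : HasDerivAt (fun τ => ∑ i, g i (u τ i) * c i) (∑ i, D i * c i) τ₀ :=
    HasDerivAt.fun_sum fun i _ => (hYd i).mul_const (c i)
  have hinner : ∀ i, HasDerivAt (fun τ => ∑ j, M i j * g j (u τ j)) (∑ j, M i j * D j) τ₀ :=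
    fun i => HasDerivAt.fun_sum fun j _ => (hYd j).const_mul (M i j)
  have hS2 : HasDerivAt (fun τ => ∑ i, g i (u τ i) * ∑ j, M i j * g j (u τ j))
      (∑ i, (D i * (∑ j, M i j * g j (u τ₀ j)) + g i (u τ₀ i) * (∑ j, M i j * D j))) τ₀ :=
    HasDerivAt.fun_sum fun i _ => (hYd i).mul (hinner i)
  have hS3 : HasDerivAt (fun τ => ∑ i, g i (u τ i)) (∑ i, D i) τ₀ :=
    HasDerivAt.fun_sum fun i _ => hYd i
  have hS4 : HasDerivAt (fun τ => ∑ i, (g i (u τ i)) ^ 2)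
      (∑ i, ((2:ℕ) : ℝ) * g i (u τ₀ i) ^ 1 * D i) τ₀ :=
    HasDerivAt.fun_sum fun i _ => (hYd i).pow 2
  have hF := (((hS1.const_mul (-2)).add hS2).add (hS3.const_mul (2 * lam1))).add
    (hS4.const_mul lam2)
  have hfun : (fun τ => h (fun i => g i (u τ i)))
      = (fun τ => -2 * (∑ i, g i (u τ i) * c i) + (∑ i, g i (u τ i) * ∑ j, M i j * g j (u τ j))
        + 2 * lam1 * (∑ i, g i (u τ i)) + lam2 * (∑ i, (g i (u τ i)) ^ 2)) := by
    funext τ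
    rw [hh]
    have habs : ∀ i, |g i (u τ i)| = g i (u τ i) := fun i => abs_of_nonneg (hYnn τ i)
    simp only [habs]
  have hM : ∀ i j, M i j = M j i := by
    intro i j
    exact congrFun (congrFun hMsymm j) i
  have hswap : ∑ i, g i (u τ₀ i) * ∑ j, M i j * D j
      = ∑ i, D i * ∑ j, M i j * g j (u τ₀ j) := by
    simp only [Finset.mul_sum]
    rw [Finset.sum_comm]
    refine Finset.sum_congr rfl fun i _ => Finset.sum_congr rfl fun j _ => ?_
    rw [hM j i]
    ring
  set d : ℝ := -2 * (∑ i, D i * c i)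
      + (∑ i, (D i * (∑ j, M i j * g j (u τ₀ j)) + g i (u τ₀ i) * (∑ j, M i j * D j)))
      + 2 * lam1 * (∑ i, D i)
      + lam2 * (∑ i, ((2:ℕ) : ℝ) * g i (u τ₀ i) ^ 1 * D i) with hd_def
  have hd : d = ∑ i, D i * (-2 * c i + 2 * (∑ j, M i j * g j (u τ₀ j)) + 2 * lam1
      + 2 * lam2 * g i (u τ₀ i)) := by
    rw [hd_def, Finset.sum_add_distrib, hswap, Finset.mul_sum, Finset.mul_sum, Finset.mul_sum,
      ← Finset.sum_add_distrib, ← Finset.sum_add_distrib, ← Finset.sum_add_distrib,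
      ← Finset.sum_add_distrib]
    refine Finset.sum_congr rfl fun i _ => ?_
    push_cast
    ring
  have hterm : ∀ i, D i * (-2 * c i + 2 * (∑ j, M i j * g j (u τ₀ j)) + 2 * lam1
      + 2 * lam2 * g i (u τ₀ i)) ≤ 0 := by
    intro i
    by_cases hgt : lam1 < u τ₀ i
    · have hDi : D i = u' i / (lam2 + M i i) := if_pos hgt
      have hei := hdiag i
      have hyi : g i (u τ₀ i) = (u τ₀ i - lam1) / (lam2 + M i i) := by
        rw [hg, max_eq_left (by linarith : (0:ℝ) ≤ u τ₀ i - lam1)]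
      have hSsplit : ∑ j, M i j * g j (u τ₀ j)
          = (∑ j ∈ univ \ {i}, M i j * g j (u τ₀ j)) + M i i * g i (u τ₀ i) := by
        rw [Finset.sum_eq_sum_sdiff_singleton_add (mem_univ i)]
      have hui : u' i = -u τ₀ i + c i - ∑ j ∈ univ \ {i}, M i j * g j (u τ₀ j) := rfl
      have hP : -2 * c i + 2 * (∑ j, M i j * g j (u τ₀ j)) + 2 * lam1
          + 2 * lam2 * g i (u τ₀ i) = -2 * u' i := by
        rw [hSsplit, hyi, hui]
        field_simp
        ring
      rw [hP, hDi]
      have : u' i / (lam2 + M i i) * (-2 * u' i) = -(2 * u' i ^ 2 / (lam2 + M i i)) := by ring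
      rw [this]
      exact neg_nonpos.mpr (by positivity)
    · have hDi : D i = 0 := if_neg hgt
      rw [hDi, zero_mul]
  refine ⟨d, ?_, ?_⟩
  · rw [hd]
    exact Finset.sum_nonpos fun i _ => hterm i
  · rw [hfun]
    exact hF
end

section
/- Suppose the time-averaged spike trains ỹ_i(τ) = N_i(τ)/τ of the spiking network converge to limits y*_i ≥ 0 as τ → ∞, and the averaged input currents converge accordingly, so that y* satisfies: for each i, either y*_i = 0 and c_i - (M̄ y*)_i - λ₁ ≤ 0, or y*_i > 0 and y*_i = (c_i - (M̄ y*)_i - λ₁)/(λ₂ + M_ii). If M + λ₂ I is positive definite, then y* is the unique global minimizer of h(y) = -2 y^T c + y^T M y + 2λ₁‖y‖₁ + λ₂‖y‖₂² over the nonnegative orthant. -/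
open Finset Matrix

/-- If the limit `y* ≥ 0` of the time-averaged spike trains satisfies, for
each `i`, either `y*_i = 0` and `c_i - (M̄ y*)_i - λ₁ ≤ 0`, or `y*_i > 0` and
`y*_i = (c_i - (M̄ y*)_i - λ₁)/(λ₂ + M_ii)`, and if `M + λ₂ I` is positive definite,
then `y*` is the unique global minimizer of
`h(y) = -2 yᵀc + yᵀMy + 2λ₁‖y‖₁ + λ₂‖y‖₂²` over the nonnegative orthant. -/
theorem spiking_limit_is_unique_minimizer
    (k : ℕ) (c : Fin k → ℝ) (lam1 lam2 : ℝ)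
    (hlam1 : 0 ≤ lam1) (hlam2 : 0 ≤ lam2)
    (M : Matrix (Fin k) (Fin k) ℝ) (hMsymm : Mᵀ = M)
    (hpd : (M + lam2 • (1 : Matrix (Fin k) (Fin k) ℝ)).PosDef)
    (h : (Fin k → ℝ) → ℝ)
    (hh : ∀ y, h y = -2 * (∑ i, y i * c i) + (∑ i, y i * ∑ j, M i j * y j)
        + 2 * lam1 * (∑ i, |y i|) + lam2 * (∑ i, (y i) ^ 2))
    (ystar : Fin k → ℝ) (hy : ∀ i, 0 ≤ ystar i)
    (hcond : ∀ i,
      (ystar i = 0 ∧ c i - (∑ j ∈ univ \ {i}, M i j * ystar j) - lam1 ≤ 0) ∨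
      (0 < ystar i ∧ ystar i =
        (c i - (∑ j ∈ univ \ {i}, M i j * ystar j) - lam1) / (lam2 + M i i))) :
    (∀ y : Fin k → ℝ, (∀ i, 0 ≤ y i) → h ystar ≤ h y) ∧
      (∀ y : Fin k → ℝ, (∀ i, 0 ≤ y i) → h y ≤ h ystar → y = ystar) := by
  classical
  set A : Matrix (Fin k) (Fin k) ℝ := M + lam2 • (1 : Matrix (Fin k) (Fin k) ℝ) with hAdef
  have hAentry : ∀ i j, A i j = M i j + (if i = j then lam2 else 0) := by
    intro i j
    simp [hAdef, Matrix.one_apply, mul_ite]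
  have hMsymm' : ∀ i j, M i j = M j i := fun i j => congrFun (congrFun hMsymm j) i
  have hAsymm : ∀ i j, A i j = A j i := by
    intro i j
    rw [hAentry, hAentry, hMsymm' i j]
    by_cases hij : i = j <;> simp [hij, eq_comm]
  set s : Fin k → ℝ := fun i => c i - lam1 with hsdef
  set L : Fin k → ℝ := fun i => ∑ j, A i j * ystar j with hLdef
  -- split the diagonal off L
  have hL : ∀ i, L i = (∑ j ∈ univ \ {i}, M i j * ystar j) + (lam2 + M i i) * ystar i := by
    intro i
    rw [show L i = ∑ j, A i j * ystar j from rfl,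
      ← Finset.add_sum_erase _ _ (Finset.mem_univ i), Finset.erase_eq]
    have h1 : A i i = M i i + lam2 := by simp [hAentry]
    have h2 : ∑ j ∈ univ \ {i}, A i j * ystar j = ∑ j ∈ univ \ {i}, M i j * ystar j := by
      refine Finset.sum_congr rfl fun j hj => ?_
      have hne : i ≠ j := by
        rw [Finset.mem_sdiff, Finset.mem_singleton] at hj
        exact fun hij => hj.2 hij.symm
      rw [hAentry, if_neg hne, add_zero]
    rw [h1, h2]; ring
  -- positivity of the quadratic form
  have hQpos : ∀ d : Fin k → ℝ, d ≠ 0 → 0 < ∑ i, d i * ∑ j, A i j * d j := by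
    intro d hd
    have hpos := hpd.dotProduct_mulVec_pos hd
    simpa [dotProduct, mulVec] using hpos
  -- diagonal entries are positive
  have hdiag : ∀ i, 0 < lam2 + M i i := by
    intro i
    have hx : (Pi.single i 1 : Fin k → ℝ) ≠ 0 := by
      intro h0
      have := congrFun h0 i
      simp at this
    have hpos := hQpos (Pi.single i 1) hx
    have hval : ∑ i', (Pi.single i 1 : Fin k → ℝ) i' * ∑ j, A i' j * (Pi.single i 1 : Fin k → ℝ) j
        = A i i := by
      rw [Finset.sum_eq_single i]
      · rw [Finset.sum_eq_single i]
        · simp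
        · intro j _ hj; simp [Pi.single_apply, hj]
        · intro hi; exact absurd (Finset.mem_univ i) hi
      · intro j _ hj; simp [Pi.single_apply, hj]
      · intro hi; exact absurd (Finset.mem_univ i) hi
    rw [hval, hAentry, if_pos rfl] at hpos
    linarith
  -- KKT conditions
  have hge : ∀ i, s i ≤ L i := by
    intro i
    rcases hcond i with ⟨h0, hle⟩ | ⟨hposy, heq⟩
    · rw [hL i, h0]
      show c i - lam1 ≤ _
      linarith
    · have hd := hdiag i
      have heq' : (lam2 + M i i) * ystar i
          = c i - (∑ j ∈ univ \ {i}, M i j * ystar j) - lam1 := by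
        rw [heq]; field_simp
      rw [hL i]
      show c i - lam1 ≤ _
      linarith
  have hcomp : ∀ i, ystar i * (L i - s i) = 0 := by
    intro i
    rcases hcond i with ⟨h0, _⟩ | ⟨hposy, heq⟩
    · rw [h0]; ring
    · have hd := hdiag i
      have heq' : (lam2 + M i i) * ystar i
          = c i - (∑ j ∈ univ \ {i}, M i j * ystar j) - lam1 := by
        rw [heq]; field_simp
      have hz : L i - s i = 0 := by
        rw [hL i]
        show _ - (c i - lam1) = 0
        linarith
      rw [hz, mul_zero]
  -- representation of h on the nonnegative orthant
  have hBrep : ∀ y : Fin k → ℝ, (∀ i, 0 ≤ y i) →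
      h y = (∑ i, y i * ∑ j, A i j * y j) - 2 * ∑ i, y i * s i := by
    intro y hy'
    rw [hh]
    have habs : (∑ i, |y i|) = ∑ i, y i :=
      Finset.sum_congr rfl fun i _ => abs_of_nonneg (hy' i)
    rw [habs]
    have hsplit : ∑ i, y i * ∑ j, A i j * y j
        = (∑ i, y i * ∑ j, M i j * y j) + lam2 * ∑ i, (y i) ^ 2 := by
      rw [Finset.mul_sum, ← Finset.sum_add_distrib]
      refine Finset.sum_congr rfl fun i _ => ?_
      have hin : ∑ j, A i j * y j = (∑ j, M i j * y j) + lam2 * y i := by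
        simp only [hAentry, add_mul, ite_mul, zero_mul, Finset.sum_add_distrib,
          Finset.sum_ite_eq, Finset.mem_univ, if_true]
      rw [hin]; ring
    have hslin : ∑ i, y i * s i = (∑ i, y i * c i) - lam1 * ∑ i, y i := by
      rw [Finset.mul_sum, ← Finset.sum_sub_distrib]
      refine Finset.sum_congr rfl fun i _ => ?_
      show y i * (c i - lam1) = _
      ring
    rw [hsplit, hslin]; ring
  -- key expansion of the difference
  have hkey : ∀ y : Fin k → ℝ, (∀ i, 0 ≤ y i) →
      h y - h ystar = (∑ i, (y i - ystar i) * ∑ j, A i j * (y j - ystar j))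
        + 2 * ∑ i, y i * (L i - s i) := by
    intro y hy'
    rw [hBrep y hy', hBrep ystar hy]
    have e1 : ∑ i, (y i - ystar i) * ∑ j, A i j * (y j - ystar j)
        = (∑ i, y i * ∑ j, A i j * y j) - (∑ i, y i * ∑ j, A i j * ystar j)
          - (∑ i, ystar i * ∑ j, A i j * y j) + ∑ i, ystar i * ∑ j, A i j * ystar j := by
      rw [← Finset.sum_sub_distrib, ← Finset.sum_sub_distrib, ← Finset.sum_add_distrib]
      refine Finset.sum_congr rfl fun i _ => ?_
      have hj : ∑ j, A i j * (y j - ystar j)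
          = (∑ j, A i j * y j) - ∑ j, A i j * ystar j := by
        rw [← Finset.sum_sub_distrib]
        exact Finset.sum_congr rfl fun j _ => by ring
      rw [hj]; ring
    have e2 : ∑ i, ystar i * ∑ j, A i j * y j = ∑ i, y i * ∑ j, A i j * ystar j := by
      simp only [Finset.mul_sum]
      rw [Finset.sum_comm]
      refine Finset.sum_congr rfl fun a _ => Finset.sum_congr rfl fun b _ => ?_
      rw [hAsymm b a]; ring
    have e3 : ∑ i, y i * (L i - s i)
        = (∑ i, y i * ∑ j, A i j * ystar j) - ∑ i, y i * s i := by
      rw [← Finset.sum_sub_distrib]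
      refine Finset.sum_congr rfl fun i _ => ?_
      rw [show L i = ∑ j, A i j * ystar j from rfl]; ring
    have e4 : ∑ i, ystar i * ∑ j, A i j * ystar j = ∑ i, ystar i * s i := by
      refine Finset.sum_congr rfl fun i _ => ?_
      have := hcomp i
      rw [show L i = ∑ j, A i j * ystar j from rfl] at this
      nlinarith [this]
    rw [e1, e2, e3, e4]; ring
  have hTnn : ∀ y : Fin k → ℝ, (∀ i, 0 ≤ y i) → 0 ≤ ∑ i, y i * (L i - s i) := by
    intro y hy'
    exact Finset.sum_nonneg fun i _ => mul_nonneg (hy' i) (sub_nonneg.2 (hge i))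
  constructor
  · intro y hy'
    by_cases hd : (fun i => y i - ystar i) = 0
    · have hyy : y = ystar := funext fun i => by
        have := congrFun hd i; simpa [sub_eq_zero] using this
      rw [hyy]
    · have h1 := hQpos _ hd
      have h2 := hTnn y hy'
      have h3 := hkey y hy'
      linarith
  · intro y hy' hle
    by_contra hne
    have hd : (fun i => y i - ystar i) ≠ 0 := by
      intro h0
      exact hne (funext fun i => by
        have := congrFun h0 i; simpa [sub_eq_zero] using this)
    have h1 := hQpos _ hd
    have h2 := hTnn y hy'
    have h3 := hkey y hy'
    linarith
end
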